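/- Let R be a commutative ring, W ⊆ R a multiplicatively closed set, M an R-module, and δ : M → N an A-linear differential operator of order ≤ m (for A ⊆ R a subring with W ∩ A acting invertibly on localized modules as needed). Then there exists a unique (W∩A)⁻¹A-linear differential operator δ' : W⁻¹M → W⁻¹N of order ≤ m such that δ'(β/1) = δ(β)/1 for all β ∈ M, constructed inductively by δ'(β/w) = (δ(β) − [δ,w]'(β/w))/w. -/

import Mathlib

/-- The commutator `[δ, r] = δ ∘ (r • ·) - r • δ` of an `A`-linear map `δ : M → N`
with multiplication by `r ∈ R`. -/
def commutatorSMul {R A M N : Type*} [CommRing R] [CommRing A] [Algebra A R]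
    [AddCommGroup M] [Module R M] [AddCommGroup N] [Module R N]
    [Module A M] [Module A N] [IsScalarTower A R M] [IsScalarTower A R N]
    (δ : M →ₗ[A] N) (r : R) : M →ₗ[A] N where
  toFun w := δ (r • w) - r • δ w
  map_add' x y := by simp only [smul_add, map_add]; abel
  map_smul' a x := by
    simp only [RingHom.id_apply]
    rw [← smul_comm a r x]
    simp only [map_smul]
    rw [← smul_comm a r (δ x), ← smul_sub]

/-- `IsDiffOp m δ` says that `δ` is an `A`-linear differential operator of order at
most `m` relative to the `R`-module structures: `Diff⁰ = Hom_R(M,N)`, and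
`δ ∈ Diffᵐ` iff `[δ, r] ∈ Diffᵐ⁻¹` for all `r ∈ R`. -/
def IsDiffOp (R : Type*) {A M N : Type*} [CommRing R] [CommRing A] [Algebra A R]
    [AddCommGroup M] [Module R M] [AddCommGroup N] [Module R N]
    [Module A M] [Module A N] [IsScalarTower A R M] [IsScalarTower A R N] :
    ℕ → (M →ₗ[A] N) → Prop
  | 0, δ => ∀ (r : R) (w : M), δ (r • w) = r • δ w
  | m + 1, δ => ∀ r : R, IsDiffOp R m (commutatorSMul δ r)

/-- Multiplication by a ring element as an `A`-linear map. -/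
def smulMapA (R : Type*) {A M : Type*} [CommRing R] [CommRing A] [Algebra A R]
    [AddCommGroup M] [Module R M] [Module A M] [IsScalarTower A R M] (ρ : R) :
    M →ₗ[A] M where
  toFun x := ρ • x
  map_add' := smul_add ρ
  map_smul' a x := by
    simp only [RingHom.id_apply]
    rw [← algebraMap_smul R a x, ← algebraMap_smul R a (ρ • x), smul_comm]


@[simp] theorem smulMapA_apply (R : Type*) {A M : Type*} [CommRing R] [CommRing A] [Algebra A R]
    [AddCommGroup M] [Module R M] [Module A M] [IsScalarTower A R M] (ρ : R) (x : M) :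
    (smulMapA R ρ : M →ₗ[A] M) x = ρ • x := rfl


attribute [-instance] OreLocalization.instSMulOfIsScalarTower
attribute [-instance] OreLocalization.instMulActionOfIsScalarTower
attribute [-instance] OreLocalization.instDistribMulActionOfIsScalarTower
attribute [-instance] OreLocalization.instModuleOfIsScalarTower

section General
variable {R A M N : Type*} [CommRing R] [CommRing A] [Algebra A R]
  [AddCommGroup M] [Module R M] [AddCommGroup N] [Module R N]
  [Module A M] [Module A N] [IsScalarTower A R M] [IsScalarTower A R N]

@[simp] theorem commutatorSMul_apply (δ : M →ₗ[A] N) (r : R) (x : M) :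
    commutatorSMul δ r x = δ (r • x) - r • δ x := rfl

theorem IsDiffOp.sub : ∀ (m : ℕ) {δ₁ δ₂ : M →ₗ[A] N}, IsDiffOp R m δ₁ → IsDiffOp R m δ₂ →
    IsDiffOp R m (δ₁ - δ₂)
  | 0, δ₁, δ₂, h1, h2 => by
    simp only [IsDiffOp] at *
    intro r x
    simp [LinearMap.sub_apply, h1 r x, h2 r x, smul_sub]
  | m + 1, δ₁, δ₂, h1, h2 => by
    simp only [IsDiffOp] at *
    intro r
    have h : commutatorSMul (δ₁ - δ₂) r = commutatorSMul δ₁ r - commutatorSMul δ₂ r := by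
      ext x; simp only [commutatorSMul_apply, LinearMap.sub_apply, smul_sub]; abel
    rw [h]
    exact IsDiffOp.sub m (h1 r) (h2 r)

theorem IsDiffOp.add : ∀ (m : ℕ) {δ₁ δ₂ : M →ₗ[A] N}, IsDiffOp R m δ₁ → IsDiffOp R m δ₂ →
    IsDiffOp R m (δ₁ + δ₂)
  | 0, δ₁, δ₂, h1, h2 => by
    simp only [IsDiffOp] at *
    intro r x
    simp [LinearMap.add_apply, h1 r x, h2 r x, smul_add]
  | m + 1, δ₁, δ₂, h1, h2 => by
    simp only [IsDiffOp] at *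
    intro r
    have h : commutatorSMul (δ₁ + δ₂) r = commutatorSMul δ₁ r + commutatorSMul δ₂ r := by
      ext x; simp only [commutatorSMul_apply, LinearMap.add_apply, smul_add]; abel
    rw [h]
    exact IsDiffOp.add m (h1 r) (h2 r)

theorem IsDiffOp.comp_smulMap : ∀ (m : ℕ) {ε : M →ₗ[A] N}, IsDiffOp R m ε → ∀ (ρ : R),
    IsDiffOp R m (ε.comp (smulMapA R ρ))
  | 0, ε, h, ρ => by
    simp only [IsDiffOp] at *
    intro r x
    simp only [LinearMap.comp_apply, smulMapA_apply]
    rw [smul_comm ρ r, h r]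
  | m + 1, ε, h, ρ => by
    simp only [IsDiffOp] at *
    intro r
    have hc : commutatorSMul (ε.comp (smulMapA R ρ)) r = (commutatorSMul ε r).comp (smulMapA R ρ) := by
      ext x
      simp only [commutatorSMul_apply, LinearMap.comp_apply, smulMapA_apply]
      rw [smul_comm ρ r]
    rw [hc]
    exact IsDiffOp.comp_smulMap m (h r) ρ

theorem IsDiffOp.smulMap_comp : ∀ (m : ℕ) {ε : M →ₗ[A] N}, IsDiffOp R m ε → ∀ (ρ : R),
    IsDiffOp R m ((smulMapA R ρ).comp ε)
  | 0, ε, h, ρ => by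
    simp only [IsDiffOp] at *
    intro r x
    simp only [LinearMap.comp_apply, smulMapA_apply]
    rw [h r, smul_comm]
  | m + 1, ε, h, ρ => by
    simp only [IsDiffOp] at *
    intro r
    have hc : commutatorSMul ((smulMapA R ρ).comp ε) r = (smulMapA R ρ).comp (commutatorSMul ε r) := by
      ext x
      simp only [commutatorSMul_apply, LinearMap.comp_apply, smulMapA_apply, smul_sub]
      rw [smul_comm ρ r]
    rw [hc]
    exact IsDiffOp.smulMap_comp m (h r) ρ

end General

section Loc
variable {R A M N : Type*} [CommRing R] [CommRing A] [Algebra A R]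
  [AddCommGroup M] [Module R M] [AddCommGroup N] [Module R N]
  [Module A M] [Module A N] [IsScalarTower A R M] [IsScalarTower A R N]
  (W : Submonoid R)
  [instAM : Module A (LocalizedModule W M)] [instAN : Module A (LocalizedModule W N)]
  [@IsScalarTower A (Localization W) (LocalizedModule W M) _ _ instAM.toSMul]
  [@IsScalarTower A (Localization W) (LocalizedModule W N) _ _ instAN.toSMul]

section Helpers
variable {P : Type*} [AddCommGroup P] [Module R P] [Module A P] [IsScalarTower A R P]
  [instAP : Module A (LocalizedModule W P)]
  [@IsScalarTower A (Localization W) (LocalizedModule W P) _ _ instAP.toSMul]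

theorem loc_smul_mk_A (a : A) (β : P) (w : W) :
    a • (LocalizedModule.mk β w : LocalizedModule W P) = LocalizedModule.mk (a • β) w := by
  rw [← algebraMap_smul (Localization W) a (LocalizedModule.mk β w : LocalizedModule W P),
    IsScalarTower.algebraMap_apply A R (Localization W), ← Localization.mk_one_eq_algebraMap,
    LocalizedModule.mk_smul_mk, algebraMap_smul, one_mul]

theorem loc_smul_comm (a : A) (ρ : Localization W) (x : LocalizedModule W P) :
    a • ρ • x = ρ • a • x := by
  rw [← algebraMap_smul (Localization W) a x, ← algebraMap_smul (Localization W) a (ρ • x),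
    smul_comm]

theorem mk_one_smul_mk (r : R) (β : P) (w : W) :
    (Localization.mk r 1 : Localization W) • (LocalizedModule.mk β w : LocalizedModule W P)
      = LocalizedModule.mk (r • β) w := by
  rw [LocalizedModule.mk_smul_mk, one_mul]

theorem mk_w_smul (w : W) (β : P) (v : W) (h : v = w) :
    (Localization.mk (w : R) 1 : Localization W) • (LocalizedModule.mk β v : LocalizedModule W P)
      = LocalizedModule.mk β 1 := by
  subst h
  rw [mk_one_smul_mk, ← Submonoid.smul_def, LocalizedModule.mk_cancel]

theorem mk_sub_one (x y : P) :
    (LocalizedModule.mk (x - y) 1 : LocalizedModule W P)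
      = LocalizedModule.mk x 1 - LocalizedModule.mk y 1 :=
  map_sub (LocalizedModule.mkLinearMap W P) x y

theorem mk_add_one (x y : P) :
    (LocalizedModule.mk (x + y) 1 : LocalizedModule W P)
      = LocalizedModule.mk x 1 + LocalizedModule.mk y 1 :=
  map_add (LocalizedModule.mkLinearMap W P) x y

end Helpers

theorem inv_w_mul_w (w : W) :
    (Localization.mk 1 w : Localization W) * Localization.mk (w : R) 1 = 1 := by
  rw [Localization.mk_mul, one_mul, mul_one, Localization.mk_self]

theorem inv_cw_mul_c (c w : W) :
    (Localization.mk 1 (c * w) : Localization W) * Localization.mk (c : R) 1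
      = Localization.mk 1 w := by
  rw [Localization.mk_mul, one_mul, mul_one]
  have h : (Localization.mk (c : R) (c * w) : Localization W)
      = Localization.mk (c : R) c * Localization.mk 1 w := by
    rw [Localization.mk_mul, mul_one]
  rw [h, Localization.mk_self, one_mul]

theorem loc_diffOp_eq_zero : ∀ (m : ℕ) (ε : LocalizedModule W M →ₗ[A] LocalizedModule W N),
    IsDiffOp (Localization W) m ε → (∀ β : M, ε (LocalizedModule.mk β 1) = 0) →
    ∀ x, ε x = 0 := by
  intro m
  induction m with
  | zero =>
    intro ε hε h0 x
    simp only [IsDiffOp] at hε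
    induction x using LocalizedModule.induction_on with
    | h β w =>
      have h : (LocalizedModule.mk β w : LocalizedModule W M)
          = (Localization.mk 1 w : Localization W) • LocalizedModule.mk β 1 := by
        rw [LocalizedModule.mk_smul_mk, one_smul, mul_one]
      rw [h, hε, h0, smul_zero]
  | succ m ih =>
    intro ε hε h0 x
    simp only [IsDiffOp] at hε
    induction x using LocalizedModule.induction_on with
    | h β w =>
      have hvan : ∀ β' : M,
          commutatorSMul ε (Localization.mk (w : R) 1 : Localization W)
            (LocalizedModule.mk β' 1) = 0 := by
        intro β'
        rw [commutatorSMul_apply, mk_one_smul_mk, h0, h0, smul_zero, sub_zero]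
      have hzero := ih _ (hε (Localization.mk (w : R) 1)) hvan (LocalizedModule.mk β w)
      simp only [commutatorSMul_apply] at hzero
      rw [mk_w_smul W w β w rfl, h0, sub_eq_zero] at hzero
      have : ε (LocalizedModule.mk β w)
          = ((Localization.mk 1 w : Localization W) * Localization.mk (w : R) 1)
              • ε (LocalizedModule.mk β w) := by
        rw [inv_w_mul_w, one_smul]
      rw [this, mul_smul, ← hzero, smul_zero]

end Loc

section Exist
variable {R A M N : Type*} [CommRing R] [CommRing A] [Algebra A R]
  [AddCommGroup M] [Module R M] [AddCommGroup N] [Module R N]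
  [Module A M] [Module A N] [IsScalarTower A R M] [IsScalarTower A R N]
  (W : Submonoid R)
  [instAM : Module A (LocalizedModule W M)] [instAN : Module A (LocalizedModule W N)]
  [@IsScalarTower A (Localization W) (LocalizedModule W M) _ _ instAM.toSMul]
  [@IsScalarTower A (Localization W) (LocalizedModule W N) _ _ instAN.toSMul]

theorem loc_diffOp_exists : ∀ (m : ℕ) (δ : M →ₗ[A] N), IsDiffOp R m δ →
    ∃ δ' : LocalizedModule W M →ₗ[A] LocalizedModule W N,
      IsDiffOp (Localization W) m δ' ∧
      ∀ β : M, δ' (LocalizedModule.mk β 1) = LocalizedModule.mk (δ β) 1 := by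
  intro m
  induction m with
  | zero =>
    intro δ hδ
    simp only [IsDiffOp] at hδ
    have hwd : ∀ (p p' : M × W), p ≈ p' →
        (LocalizedModule.mk (δ p.1) p.2 : LocalizedModule W N)
          = LocalizedModule.mk (δ p'.1) p'.2 := by
      rintro ⟨β, w⟩ ⟨β', w'⟩ h
      obtain ⟨u, hu⟩ : ∃ u : W, u • w' • β = u • w • β' := h
      refine LocalizedModule.mk_eq.mpr ⟨u, ?_⟩
      have h2 := congrArg δ hu
      simpa only [Submonoid.smul_def, hδ] using h2
    refine ⟨{ toFun := fun x => LocalizedModule.liftOn x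
                (fun p => LocalizedModule.mk (δ p.1) p.2) hwd,
              map_add' := ?_, map_smul' := ?_ }, ?_, ?_⟩
    · intro x y
      induction x, y using LocalizedModule.induction_on₂ with
      | h β β' w w' =>
        rw [LocalizedModule.mk_add_mk, LocalizedModule.liftOn_mk, LocalizedModule.liftOn_mk,
          LocalizedModule.liftOn_mk, LocalizedModule.mk_add_mk]
        congr 1
        simp only [Submonoid.smul_def, map_add, hδ]
    · intro a x
      induction x using LocalizedModule.induction_on with
      | h β w =>
        simp only [RingHom.id_apply]
        rw [loc_smul_mk_A, LocalizedModule.liftOn_mk, LocalizedModule.liftOn_mk,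
          LinearMap.map_smul, loc_smul_mk_A]
    · simp only [IsDiffOp]
      intro ρ x
      induction ρ using Localization.induction_on with
      | H p =>
        obtain ⟨r, s⟩ := p
        induction x using LocalizedModule.induction_on with
        | h β w =>
          simp only [LinearMap.coe_mk, AddHom.coe_mk]
          rw [LocalizedModule.mk_smul_mk, LocalizedModule.liftOn_mk, LocalizedModule.liftOn_mk,
            LocalizedModule.mk_smul_mk]
          congr 1
          exact hδ r β
    · intro β
      simp only [LinearMap.coe_mk, AddHom.coe_mk]
      rw [LocalizedModule.liftOn_mk]
  | succ m ih =>
    intro δ hδ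
    simp only [IsDiffOp] at hδ
    have H : ∀ r : R, ∃ δ' : LocalizedModule W M →ₗ[A] LocalizedModule W N,
        IsDiffOp (Localization W) m δ' ∧
        ∀ β : M, δ' (LocalizedModule.mk β 1)
          = LocalizedModule.mk ((commutatorSMul δ r) β) 1 :=
      fun r => ih (commutatorSMul δ r) (hδ r)
    choose D hD1 hD2 using H
    have Duniq : ∀ (r : R) (E : LocalizedModule W M →ₗ[A] LocalizedModule W N),
        IsDiffOp (Localization W) m E →
        (∀ β : M, E (LocalizedModule.mk β 1)
          = LocalizedModule.mk (commutatorSMul δ r β) 1) →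
        E = D r := by
      intro r E hE hEv
      have hz := loc_diffOp_eq_zero W m (E - D r) (IsDiffOp.sub m hE (hD1 r))
        (fun β => by rw [LinearMap.sub_apply, hEv, hD2, sub_self])
      ext x
      have h := hz x
      rwa [LinearMap.sub_apply, sub_eq_zero] at h
    have hDmul : ∀ r s : R, D (r * s) =
        (D r).comp (smulMapA (Localization W) (Localization.mk s 1)) +
        (smulMapA (Localization W) (Localization.mk r 1)).comp (D s) := by
      intro r s
      refine (Duniq (r * s) _
        (IsDiffOp.add m (IsDiffOp.comp_smulMap m (hD1 r) _)
          (IsDiffOp.smulMap_comp m (hD1 s) _)) ?_).symm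
      intro β
      rw [LinearMap.add_apply, LinearMap.comp_apply, LinearMap.comp_apply, smulMapA_apply,
        smulMapA_apply, mk_one_smul_mk, hD2, hD2, mk_one_smul_mk, ← mk_add_one]
      congr 1
      simp only [commutatorSMul_apply, mul_smul, smul_sub, smul_add]
      abel
    have hkey : ∀ (r : R) (v : W) (β : M),
        (LocalizedModule.mk (δ (r • β)) 1 : LocalizedModule W N)
            - D (v : R) (LocalizedModule.mk (r • β) v)
          = (Localization.mk r 1 : Localization W) •
              ((LocalizedModule.mk (δ β) 1 : LocalizedModule W N)
                - D (v : R) (LocalizedModule.mk β v))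
            + (Localization.mk (v : R) 1 : Localization W) • D r (LocalizedModule.mk β v) := by
      intro r v β
      have e1 := LinearMap.congr_fun (hDmul (v : R) r) (LocalizedModule.mk β v)
      have e2 := LinearMap.congr_fun (hDmul r (v : R)) (LocalizedModule.mk β v)
      rw [mul_comm] at e1
      simp only [LinearMap.add_apply, LinearMap.comp_apply, smulMapA_apply] at e1 e2
      rw [e2] at e1
      have e3 : D (v : R) ((Localization.mk r 1 : Localization W) • LocalizedModule.mk β v)
          = D r ((Localization.mk (v : R) 1 : Localization W) • LocalizedModule.mk β v)
            + (Localization.mk r 1 : Localization W) • D (v : R) (LocalizedModule.mk β v)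
            - (Localization.mk (v : R) 1 : Localization W) • D r (LocalizedModule.mk β v) :=
        eq_sub_of_add_eq e1.symm
      rw [← mk_one_smul_mk W r β v, e3, mk_w_smul W v β v rfl, hD2, commutatorSMul_apply,
        mk_sub_one, ← mk_one_smul_mk W r (δ β) 1, smul_sub]
      abel
    -- the underlying function on representatives
    set f : M × W → LocalizedModule W N := fun p =>
      (Localization.mk 1 p.2 : Localization W) •
        ((LocalizedModule.mk (δ p.1) 1 : LocalizedModule W N)
          - D (p.2 : R) (LocalizedModule.mk p.1 p.2)) with hf
    have hscale : ∀ (c w : W) (β : M), f ((c : R) • β, c * w) = f (β, w) := by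
      intro c w β
      simp only [hf]
      have h1 : (LocalizedModule.mk ((c : R) • β) (c * w) : LocalizedModule W M)
          = LocalizedModule.mk β w := by
        rw [← Submonoid.smul_def, LocalizedModule.mk_cancel_common_left]
      have h2 := LinearMap.congr_fun (hDmul (c : R) (w : R)) (LocalizedModule.mk β w)
      rw [← Submonoid.coe_mul] at h2
      simp only [LinearMap.add_apply, LinearMap.comp_apply, smulMapA_apply] at h2
      rw [h1, h2, mk_w_smul W w β w rfl, hD2, commutatorSMul_apply, mk_sub_one,
        ← mk_one_smul_mk W (c : R) (δ β) 1]
      have h3 : (LocalizedModule.mk (δ ((c : R) • β)) 1 : LocalizedModule W N)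
            - ((LocalizedModule.mk (δ ((c : R) • β)) 1 : LocalizedModule W N)
                - (Localization.mk (c : R) 1 : Localization W) • LocalizedModule.mk (δ β) 1
              + (Localization.mk (c : R) 1 : Localization W)
                  • D (w : R) (LocalizedModule.mk β w))
          = (Localization.mk (c : R) 1 : Localization W) •
              ((LocalizedModule.mk (δ β) 1 : LocalizedModule W N)
                - D (w : R) (LocalizedModule.mk β w)) := by
        rw [smul_sub]; abel
      rw [h3, ← mul_smul, inv_cw_mul_c]
    have hwd : ∀ (p p' : M × W), p ≈ p' → f p = f p' := by
      rintro ⟨β, w⟩ ⟨β', w'⟩ h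
      obtain ⟨u, hu⟩ : ∃ c : W, c • w' • β = c • w • β' := h
      have h1 := hscale (u * w') w β
      have h2 := hscale (u * w') w β
      have e1 : (((u * w' : W) : R)) • β = (((u * w : W) : R)) • β' := by
        simp only [Submonoid.coe_mul, mul_smul]
        simpa only [Submonoid.smul_def] using hu
      have e2 : (u * w') * w = (u * w) * w' := mul_right_comm u w' w
      rw [← hscale (u * w') w β, ← hscale (u * w) w' β', e1, e2]
    have hadd : ∀ (β β' : M) (w w' : W),
        f (w' • β + w • β', w * w') = f (β, w) + f (β', w') := by
      intro β β' w w'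
      simp only [hf]
      have h0 : (LocalizedModule.mk (w' • β + w • β') (w * w') : LocalizedModule W M)
          = LocalizedModule.mk β w + LocalizedModule.mk β' w' :=
        (LocalizedModule.mk_add_mk).symm
      have h2x := LinearMap.congr_fun (hDmul (w' : R) (w : R)) (LocalizedModule.mk β w)
      rw [← Submonoid.coe_mul, mul_comm w' w] at h2x
      simp only [LinearMap.add_apply, LinearMap.comp_apply, smulMapA_apply] at h2x
      rw [mk_w_smul W w β w rfl, hD2, commutatorSMul_apply, mk_sub_one,
        ← mk_one_smul_mk W (w' : R) (δ β) 1] at h2x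
      have h2y := LinearMap.congr_fun (hDmul (w : R) (w' : R)) (LocalizedModule.mk β' w')
      rw [← Submonoid.coe_mul] at h2y
      simp only [LinearMap.add_apply, LinearMap.comp_apply, smulMapA_apply] at h2y
      rw [mk_w_smul W w' β' w' rfl, hD2, commutatorSMul_apply, mk_sub_one,
        ← mk_one_smul_mk W (w : R) (δ β') 1] at h2y
      rw [h0, map_add (D ((w * w' : W) : R)) (LocalizedModule.mk β w) (LocalizedModule.mk β' w'), h2x, h2y]
      rw [Submonoid.smul_def, Submonoid.smul_def, map_add δ, mk_add_one]
      have h3 : ∀ X1 X2 Y1 Y2 Z1 Z2 : LocalizedModule W N,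
          (X1 + X2) - ((X1 - (Localization.mk (w' : R) 1 : Localization W) • Y1
              + (Localization.mk (w' : R) 1 : Localization W) • Z1)
            + (X2 - (Localization.mk (w : R) 1 : Localization W) • Y2
              + (Localization.mk (w : R) 1 : Localization W) • Z2))
          = (Localization.mk (w' : R) 1 : Localization W) • (Y1 - Z1)
            + (Localization.mk (w : R) 1 : Localization W) • (Y2 - Z2) := by
        intro X1 X2 Y1 Y2 Z1 Z2
        rw [smul_sub, smul_sub]; abel
      rw [h3, smul_add, ← mul_smul, ← mul_smul]
      have c1 : (Localization.mk 1 (w * w') : Localization W) * Localization.mk (w' : R) 1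
          = Localization.mk 1 w := by
        rw [mul_comm w w']; exact inv_cw_mul_c W w' w
      have c2 : (Localization.mk 1 (w * w') : Localization W) * Localization.mk (w : R) 1
          = Localization.mk 1 w' := by
        exact inv_cw_mul_c W w w'
      rw [c1, c2]
    have hsmulA : ∀ (a : A) (β : M) (w : W), f (a • β, w) = a • f (β, w) := by
      intro a β w
      simp only [hf]
      rw [LinearMap.map_smul, ← loc_smul_mk_A W a (δ β) 1, ← loc_smul_mk_A W a β w,
        LinearMap.map_smul, ← smul_sub a, loc_smul_comm]
    have madd : ∀ x y : LocalizedModule W M,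
        LocalizedModule.liftOn (x + y) f hwd
          = LocalizedModule.liftOn x f hwd + LocalizedModule.liftOn y f hwd := by
      intro x y
      induction x, y using LocalizedModule.induction_on₂ with
      | h β β' w w' =>
        rw [LocalizedModule.mk_add_mk, LocalizedModule.liftOn_mk, LocalizedModule.liftOn_mk,
          LocalizedModule.liftOn_mk]
        exact hadd β β' w w'
    have msmul : ∀ (a : A) (x : LocalizedModule W M),
        LocalizedModule.liftOn (a • x) f hwd = a • LocalizedModule.liftOn x f hwd := by
      intro a x
      induction x using LocalizedModule.induction_on with
      | h β w =>
        rw [loc_smul_mk_A, LocalizedModule.liftOn_mk, LocalizedModule.liftOn_mk]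
        exact hsmulA a β w
    have hval : ∀ β : M, LocalizedModule.liftOn (LocalizedModule.mk β (1 : W)) f hwd
        = LocalizedModule.mk (δ β) 1 := by
      intro β
      rw [LocalizedModule.liftOn_mk]
      simp only [hf]
      rw [hD2, commutatorSMul_apply]
      simp only [OneMemClass.coe_one, one_smul, sub_self, LocalizedModule.zero_mk, sub_zero,
        LocalizedModule.mk_smul_mk, one_mul]
    have hcomm : ∀ (r : R) (x : LocalizedModule W M),
        LocalizedModule.liftOn ((Localization.mk r 1 : Localization W) • x) f hwd
          = (Localization.mk r 1 : Localization W) • LocalizedModule.liftOn x f hwd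
            + D r x := by
      intro r x
      induction x using LocalizedModule.induction_on with
      | h β v =>
        rw [mk_one_smul_mk, LocalizedModule.liftOn_mk, LocalizedModule.liftOn_mk]
        simp only [hf]
        rw [hkey r v β, smul_add, ← mul_smul, ← mul_smul, inv_w_mul_w, one_smul,
          mul_comm ((Localization.mk 1 v : Localization W)) (Localization.mk r 1), mul_smul]
    refine ⟨{ toFun := fun x => LocalizedModule.liftOn x f hwd,
              map_add' := madd,
              map_smul' := fun a x => msmul a x }, ?_, ?_⟩
    · simp only [IsDiffOp]
      intro ρ
      induction ρ using Localization.induction_on with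
      | H p =>
        obtain ⟨r, s⟩ := p
        have hσ : (Localization.mk (s : R) 1 : Localization W) * Localization.mk r s
            = Localization.mk r 1 := by
          rw [Localization.mk_mul, one_mul]
          have h' : (Localization.mk ((s : R) * r) s : Localization W)
              = Localization.mk (s : R) s * Localization.mk r 1 := by
            rw [Localization.mk_mul, mul_one]
          rw [h', Localization.mk_self, one_mul]
        have hρ : (Localization.mk 1 s : Localization W) * Localization.mk r 1
            = Localization.mk r s := by
          rw [Localization.mk_mul, one_mul, mul_one]
        have hE : commutatorSMul
              ({ toFun := fun x => LocalizedModule.liftOn x f hwd,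
                 map_add' := madd,
                 map_smul' := fun a x => msmul a x } :
                LocalizedModule W M →ₗ[A] LocalizedModule W N)
              (Localization.mk r s : Localization W)
            = (smulMapA (Localization W) (Localization.mk 1 s)).comp (D r)
              - ((smulMapA (Localization W) (Localization.mk 1 s)).comp (D s)).comp
                  (smulMapA (Localization W) (Localization.mk r s)) := by
          ext x
          simp only [commutatorSMul_apply, LinearMap.sub_apply, LinearMap.comp_apply,
            smulMapA_apply, LinearMap.coe_mk, AddHom.coe_mk]
          have e1 := hcomm r x
          have e2 := hcomm (s : R) ((Localization.mk r s : Localization W) • x)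
          rw [← mul_smul, hσ] at e2
          rw [e2] at e1
          have e3 := congrArg
            (fun z : LocalizedModule W N => (Localization.mk 1 s : Localization W) • z) e1
          simp only [smul_add, ← mul_smul] at e3
          rw [inv_w_mul_w, one_smul, hρ] at e3
          rw [sub_eq_sub_iff_add_eq_add]
          exact e3.trans (add_comm _ _)
        rw [hE]
        exact IsDiffOp.sub m (IsDiffOp.smulMap_comp m (hD1 r) _)
          (IsDiffOp.comp_smulMap m (IsDiffOp.smulMap_comp m (hD1 s) _) _)
    · intro β
      exact hval β

end Exist

attribute [instance] OreLocalization.instSMulOfIsScalarTower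
attribute [instance] OreLocalization.instMulActionOfIsScalarTower
attribute [instance] OreLocalization.instDistribMulActionOfIsScalarTower
attribute [instance] OreLocalization.instModuleOfIsScalarTower

/-- an `A`-linear differential operator `δ : M → N` of order `≤ m`
(with `M` finitely generated) extends uniquely to a differential operator
`δ' : W⁻¹M → W⁻¹N` of order `≤ m` over the localized ring, compatible with the
localization maps: `δ'(β/1) = δ(β)/1` for all `β ∈ M`. -/
theorem existsUnique_localized_diffOp {R A M N : Type*} [CommRing R] [CommRing A]
    [Algebra A R] [AddCommGroup M] [Module R M] [Module.Finite R M]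
    [AddCommGroup N] [Module R N]
    [Module A M] [Module A N] [IsScalarTower A R M] [IsScalarTower A R N]
    (W : Submonoid R)
    [instAM : Module A (LocalizedModule W M)] [instAN : Module A (LocalizedModule W N)]
    [@IsScalarTower A (Localization W) (LocalizedModule W M) _ _ instAM.toSMul]
    [@IsScalarTower A (Localization W) (LocalizedModule W N) _ _ instAN.toSMul]
    {m : ℕ} (δ : M →ₗ[A] N) (hδ : IsDiffOp R m δ) :
    ∃! δ' : LocalizedModule W M →ₗ[A] LocalizedModule W N,
      IsDiffOp (Localization W) m δ' ∧
      ∀ β : M, δ' (LocalizedModule.mkLinearMap W M β)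
        = LocalizedModule.mkLinearMap W N (δ β) := by
  obtain ⟨δ', h1, h2⟩ := loc_diffOp_exists W m δ hδ
  refine ⟨δ', ⟨h1, fun β => by
    rw [LocalizedModule.mkLinearMap_apply, LocalizedModule.mkLinearMap_apply]; exact h2 β⟩, ?_⟩
  rintro δ'' ⟨h1', h2'⟩
  have hz := loc_diffOp_eq_zero W m (δ'' - δ') (IsDiffOp.sub m h1' h1)
    (fun β => by
      rw [LinearMap.sub_apply, h2 β, ← LocalizedModule.mkLinearMap_apply W M β, h2' β,
        LocalizedModule.mkLinearMap_apply, sub_self])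
  ext x
  have h := hz x
  rwa [LinearMap.sub_apply, sub_eq_zero] at h
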